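/- With the same setup, the second moment of the single-shot estimator satisfies E(ν²) = Σ_{P,Q} α_P α_Q g(P,Q,β) Tr(PQ ρ), where g(P,Q,β) = (1/ζ(P,β))(1/ζ(Q,β)) Σ_{B ∈ Lift(P) ∩ Lift(Q)} β(B), given that for B ∈ Lift(P) ∩ Lift(Q) one has E_{μ(B)}[μ(B,supp(P)) μ(B,supp(Q))] = Tr(PQ ρ). -/

import Mathlib

/-- Single-qubit Pauli operators {I, X, Y, Z}. -/
inductive PauliOp : Type
  | I | X | Y | Z
deriving DecidableEq

instance : Fintype PauliOp :=
  ⟨{PauliOp.I, PauliOp.X, PauliOp.Y, PauliOp.Z}, fun x => by cases x <;> simp⟩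

/-- Single-qubit measurement bases 𝒫 = {X, Y, Z} (traceless Paulis). -/
inductive PauliBasis : Type
  | X | Y | Z
deriving DecidableEq

instance : Fintype PauliBasis :=
  ⟨{PauliBasis.X, PauliBasis.Y, PauliBasis.Z}, fun x => by cases x <;> simp⟩

instance : Inhabited PauliBasis := ⟨PauliBasis.X⟩

def PauliBasis.toPauli : PauliBasis → PauliOp
  | .X => .X
  | .Y => .Y
  | .Z => .Z

/-- The (non-identity) Pauli as a basis; junk value `X` on `I`. -/
def PauliOp.toBasis : PauliOp → PauliBasis
  | .I => .X
  | .X => .X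
  | .Y => .Y
  | .Z => .Z

/-- `Lift P`: measurement bases `B ∈ 𝒫^n` with `B_i = P_i` whenever `P_i ≠ I`. -/
def Lift {n : ℕ} (P : Fin n → PauliOp) : Finset (Fin n → PauliBasis) :=
  Finset.univ.filter fun B => ∀ i, P i ≠ PauliOp.I → (B i).toPauli = P i

/-- Support of a Pauli operator: qubits where it is not the identity. -/
def psupp {n : ℕ} (P : Fin n → PauliOp) : Finset (Fin n) :=
  Finset.univ.filter fun i => P i ≠ PauliOp.I

/-- ζ(P,β) = Σ_{B ∈ Lift(P)} β(B). -/
def zeta {n : ℕ} (P : Fin n → PauliOp) (β : (Fin n → PauliBasis) → ℝ) : ℝ :=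
  ∑ B ∈ Lift P, β B

/-- Second moment of the single-shot estimator:
E(ν²) = Σ_{P,Q} α_P α_Q g(P,Q,β) Tr(PQρ), where
g(P,Q,β) = (Σ_{B ∈ Lift P ∩ Lift Q} β(B)) / (ζ(P,β) ζ(Q,β)).
`trPQ P Q` stands for Tr(PQρ) and `Eμ2 B A A'` abstracts
E_{μ(B)}[μ(B,A) μ(B,A')], with E_{μ(B)}[μ(B,supp P) μ(B,supp Q)] = Tr(PQρ)
whenever B ∈ Lift P ∩ Lift Q. -/
theorem statement1 {n : ℕ} (β : (Fin n → PauliBasis) → ℝ)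
    (α : (Fin n → PauliOp) → ℝ)
    (trPQ : (Fin n → PauliOp) → (Fin n → PauliOp) → ℝ)
    (hβ0 : ∀ B, 0 ≤ β B) (hβ1 : ∑ B, β B = 1)
    (hcompat : ∀ P, α P ≠ 0 → 0 < zeta P β)
    (Eμ2 : (Fin n → PauliBasis) → Finset (Fin n) → Finset (Fin n) → ℝ)
    (hEμ2 : ∀ (P Q : Fin n → PauliOp), ∀ B ∈ Lift P ∩ Lift Q,
        Eμ2 B (psupp P) (psupp Q) = trPQ P Q) :
    ∑ B, β B * ∑ P, ∑ Q,
        α P * α Q * ((if B ∈ Lift P then (1:ℝ) else 0) / zeta P β)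
          * ((if B ∈ Lift Q then (1:ℝ) else 0) / zeta Q β)
          * Eμ2 B (psupp P) (psupp Q)
      = ∑ P, ∑ Q, α P * α Q *
          ((∑ B ∈ Lift P ∩ Lift Q, β B) / (zeta P β * zeta Q β)) * trPQ P Q := by
  simp only [Finset.mul_sum]
  rw [Finset.sum_comm]
  refine Finset.sum_congr rfl fun P _ => ?_
  rw [Finset.sum_comm]
  refine Finset.sum_congr rfl fun Q _ => ?_
  have hr : α P * α Q * ((∑ B ∈ Lift P ∩ Lift Q, β B) / (zeta P β * zeta Q β)) * trPQ P Q
      = ∑ B ∈ Lift P ∩ Lift Q,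
          β B * (α P * α Q * ((1:ℝ) / zeta P β) * ((1:ℝ) / zeta Q β) * trPQ P Q) := by
    rw [Finset.sum_div, Finset.mul_sum, Finset.sum_mul]
    exact Finset.sum_congr rfl fun B _ => by ring
  rw [hr]
  have hz : ∀ x ∈ (Finset.univ : Finset (Fin n → PauliBasis)), x ∉ Lift P ∩ Lift Q →
      β x * (α P * α Q * ((if x ∈ Lift P then (1:ℝ) else 0) / zeta P β)
        * ((if x ∈ Lift Q then (1:ℝ) else 0) / zeta Q β) * Eμ2 x (psupp P) (psupp Q)) = 0 := by
    intro x _ hx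
    rw [Finset.mem_inter] at hx
    push_neg at hx
    by_cases h1 : x ∈ Lift P
    · simp [h1, hx h1]
    · simp [h1]
  rw [← Finset.sum_subset (Finset.subset_univ _) hz]
  refine Finset.sum_congr rfl fun B hB => ?_
  obtain ⟨h1, h2⟩ := Finset.mem_inter.mp hB
  rw [hEμ2 P Q B hB]
  simp [h1, h2]
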